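/- Let t > 0, ε > 0, 0 < C₀ ≤ 1, and 1/13 < d < 1/2, and let (m_n)_{n ∈ ℕ} be a sequence of positive reals with C₀ n^d ≤ m_n ≤ C₀⁻¹ n^d for all n ≥ 1. For each n set θ_n := ⌊m_n² t⌋ and let P_n denote the uniform probability on increment sequences of length θ_n with associated lazy random walk path started at 0. Then ∑_{n=1}^∞ P_n[ R_{θ_n} ≥ m_n^{1+ε} ] < ∞, where R_{θ_n} is the range of the path of length θ_n. -/

import Mathlib

open scoped Classical

/-- The lazy random walk path of length `θ` started at `x`: increments are encoded by
`ω : Fin θ → Fin 3`, where the value `i ∈ {0,1,2}` encodes the increment `i - 1 ∈ {-1,0,1}`.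
`lazyPath θ x ω u` is the position after `u` steps (for `0 ≤ u ≤ θ`). -/
def lazyPath (θ : ℕ) (x : ℤ) (ω : Fin θ → Fin 3) (u : ℕ) : ℤ :=
  x + ∑ j : Fin θ, if (j : ℕ) < u then ((ω j : ℤ) - 1) else 0

/-- Vertex-occupation measure `Λ^a_θ = #{0 ≤ j ≤ θ : S(j) = a}`. -/
def vertexOcc (θ : ℕ) (x : ℤ) (ω : Fin θ → Fin 3) (a : ℤ) : ℕ :=
  ((Finset.range (θ + 1)).filter (fun j => lazyPath θ x ω j = a)).card

/-- Edge-occupation measure `Λ^{(a,b)}_θ = #{0 ≤ u ≤ θ-1 : S(u) = a, S(u+1) = b}`. -/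
def edgeOcc (θ : ℕ) (x : ℤ) (ω : Fin θ → Fin 3) (a b : ℤ) : ℕ :=
  ((Finset.range θ).filter
    (fun u => lazyPath θ x ω u = a ∧ lazyPath θ x ω (u + 1) = b)).card

/-- The range `R_θ = max_{0 ≤ u ≤ θ} S(u) − min_{0 ≤ u ≤ θ} S(u)` of the path. -/
def pathRange (θ : ℕ) (x : ℤ) (ω : Fin θ → Fin 3) : ℤ :=
  ((Finset.range (θ + 1)).sup' Finset.nonempty_range_add_one (fun u => lazyPath θ x ω u))
    - ((Finset.range (θ + 1)).inf' Finset.nonempty_range_add_one (fun u => lazyPath θ x ω u))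

section Aux

open Finset Real

lemma chernoff_count (θ u : ℕ) (a lam : ℝ) (hlam : 0 ≤ lam) (s : ℝ) (hs : s = 1 ∨ s = -1) :
    ((Finset.univ.filter (fun ω : Fin θ → Fin 3 =>
        a ≤ s * ((lazyPath θ 0 ω u : ℤ) : ℝ))).card : ℝ)
      ≤ 3 ^ θ * Real.exp ((θ : ℝ) * lam ^ 2 / 2 - lam * a) := by
  have hs2 : s ^ 2 = 1 := by rcases hs with h | h <;> simp [h]
  set f : Fin θ → Fin 3 → ℝ := fun j x =>
    Real.exp (lam * (s * (if (j : ℕ) < u then ((x : ℕ) : ℝ) - 1 else 0))) with hf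
  have hS : ∀ ω : Fin θ → Fin 3,
      ((lazyPath θ 0 ω u : ℤ) : ℝ) = ∑ j : Fin θ,
        (if (j : ℕ) < u then ((ω j : ℕ) : ℝ) - 1 else 0) := by
    intro ω
    simp only [lazyPath, zero_add]
    push_cast [apply_ite (fun z : ℤ => (z : ℝ))]
    rfl
  have hexp : ∀ ω : Fin θ → Fin 3,
      Real.exp (lam * (s * ((lazyPath θ 0 ω u : ℤ) : ℝ) - a))
        = Real.exp (-(lam * a)) * ∏ j : Fin θ, f j (ω j) := by
    intro ω
    rw [← Real.exp_sum, ← Real.exp_add]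
    congr 1
    rw [hS, Finset.mul_sum]
    ring_nf
    rw [Finset.mul_sum]
    ring_nf
  -- card ≤ sum of exp over all ω
  have h1 : ((Finset.univ.filter (fun ω : Fin θ → Fin 3 =>
        a ≤ s * ((lazyPath θ 0 ω u : ℤ) : ℝ))).card : ℝ)
      ≤ ∑ ω : Fin θ → Fin 3, Real.exp (lam * (s * ((lazyPath θ 0 ω u : ℤ) : ℝ) - a)) := by
    rw [Finset.card_eq_sum_ones]
    push_cast
    rw [← Finset.sum_filter_add_sum_filter_not Finset.univ
      (fun ω : Fin θ → Fin 3 => a ≤ s * ((lazyPath θ 0 ω u : ℤ) : ℝ))]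
    have : ∀ ω ∈ Finset.univ.filter (fun ω : Fin θ → Fin 3 =>
        a ≤ s * ((lazyPath θ 0 ω u : ℤ) : ℝ)), (1 : ℝ)
        ≤ Real.exp (lam * (s * ((lazyPath θ 0 ω u : ℤ) : ℝ) - a)) := by
      intro ω hω
      rw [Finset.mem_filter] at hω
      have : 0 ≤ lam * (s * ((lazyPath θ 0 ω u : ℤ) : ℝ) - a) :=
        mul_nonneg hlam (by linarith [hω.2])
      calc (1 : ℝ) = Real.exp 0 := by simp
      _ ≤ _ := Real.exp_le_exp.2 this
    calc ∑ ω ∈ Finset.univ.filter (fun ω : Fin θ → Fin 3 =>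
          a ≤ s * ((lazyPath θ 0 ω u : ℤ) : ℝ)), (1 : ℝ)
        ≤ ∑ ω ∈ Finset.univ.filter (fun ω : Fin θ → Fin 3 =>
          a ≤ s * ((lazyPath θ 0 ω u : ℤ) : ℝ)),
            Real.exp (lam * (s * ((lazyPath θ 0 ω u : ℤ) : ℝ) - a)) :=
          Finset.sum_le_sum this
      _ ≤ _ := le_add_of_nonneg_right (Finset.sum_nonneg fun ω _ => (Real.exp_pos _).le)
  -- factorize
  have h2 : ∑ ω : Fin θ → Fin 3, Real.exp (lam * (s * ((lazyPath θ 0 ω u : ℤ) : ℝ) - a))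
      = Real.exp (-(lam * a)) * ∏ j : Fin θ, ∑ x : Fin 3, f j x := by
    simp_rw [hexp, ← Finset.mul_sum]
    congr 1
    rw [Finset.prod_univ_sum (fun _ : Fin θ => (Finset.univ : Finset (Fin 3))) f]
    rw [Fintype.piFinset_univ]
  -- bound each factor
  have h3 : ∀ j : Fin θ, ∑ x : Fin 3, f j x ≤ 3 * Real.exp (lam ^ 2 / 2) := by
    intro j
    rw [Fin.sum_univ_three]
    simp only [hf]
    by_cases hj : (j : ℕ) < u
    · simp only [hj, if_true]
      norm_num
      have hc : Real.cosh (lam * s) ≤ Real.exp ((lam * s) ^ 2 / 2) :=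
        Real.cosh_le_exp_half_sq _
      rw [Real.cosh_eq] at hc
      have hsq : (lam * s) ^ 2 = lam ^ 2 := by rw [mul_pow, hs2, mul_one]
      rw [hsq] at hc
      have h1' : (1 : ℝ) ≤ Real.exp (lam ^ 2 / 2) := by
        rw [show (1:ℝ) = Real.exp 0 by simp]
        exact Real.exp_le_exp.2 (by positivity)
      linarith
    · simp only [hj, if_false]
      norm_num
      have h1' : (1 : ℝ) ≤ Real.exp (lam ^ 2 / 2) := by
        rw [show (1:ℝ) = Real.exp 0 by simp]
        exact Real.exp_le_exp.2 (by positivity)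
      have h0 : (0:ℝ) ≤ lam ^ 2 / 2 := by positivity
      linarith
  have h4 : ∏ j : Fin θ, ∑ x : Fin 3, f j x ≤ (3 * Real.exp (lam ^ 2 / 2)) ^ θ := by
    calc ∏ j : Fin θ, ∑ x : Fin 3, f j x
        ≤ ∏ _j : Fin θ, (3 * Real.exp (lam ^ 2 / 2)) := by
          apply Finset.prod_le_prod
          · intro j _; exact Finset.sum_nonneg fun x _ => (Real.exp_pos _).le
          · intro j _; exact h3 j
      _ = (3 * Real.exp (lam ^ 2 / 2)) ^ θ := by
          rw [Finset.prod_const]; simp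
  calc ((Finset.univ.filter (fun ω : Fin θ → Fin 3 =>
        a ≤ s * ((lazyPath θ 0 ω u : ℤ) : ℝ))).card : ℝ)
      ≤ ∑ ω : Fin θ → Fin 3, Real.exp (lam * (s * ((lazyPath θ 0 ω u : ℤ) : ℝ) - a)) := h1
    _ = Real.exp (-(lam * a)) * ∏ j : Fin θ, ∑ x : Fin 3, f j x := h2
    _ ≤ Real.exp (-(lam * a)) * (3 * Real.exp (lam ^ 2 / 2)) ^ θ := by
        apply mul_le_mul_of_nonneg_left h4 (Real.exp_pos _).le
    _ = 3 ^ θ * Real.exp ((θ : ℝ) * lam ^ 2 / 2 - lam * a) := by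
        rw [mul_pow, ← Real.exp_nat_mul, mul_left_comm, ← Real.exp_add]
        congr 1
        ring

lemma range_count_le (θ : ℕ) (r : ℝ) :
    ((Finset.univ.filter (fun ω : Fin θ → Fin 3 =>
        r ≤ ((pathRange θ 0 ω : ℤ) : ℝ))).card : ℝ)
      ≤ ∑ u ∈ Finset.range (θ + 1),
          (((Finset.univ.filter (fun ω : Fin θ → Fin 3 =>
              r / 2 ≤ (1 : ℝ) * ((lazyPath θ 0 ω u : ℤ) : ℝ))).card : ℝ)
           + ((Finset.univ.filter (fun ω : Fin θ → Fin 3 =>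
              r / 2 ≤ (-1 : ℝ) * ((lazyPath θ 0 ω u : ℤ) : ℝ))).card : ℝ)) := by
  have hsub : (Finset.univ.filter (fun ω : Fin θ → Fin 3 =>
        r ≤ ((pathRange θ 0 ω : ℤ) : ℝ)))
      ⊆ (Finset.range (θ + 1)).biUnion (fun u =>
          Finset.univ.filter (fun ω : Fin θ → Fin 3 =>
            r / 2 ≤ (1 : ℝ) * ((lazyPath θ 0 ω u : ℤ) : ℝ)
            ∨ r / 2 ≤ (-1 : ℝ) * ((lazyPath θ 0 ω u : ℤ) : ℝ))) := by
    intro ω hω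
    rw [Finset.mem_filter] at hω
    obtain ⟨-, hr⟩ := hω
    obtain ⟨u, hu, husup⟩ := Finset.exists_mem_eq_sup' (Finset.nonempty_range_add_one)
      (fun v => lazyPath θ 0 ω v)
    obtain ⟨v, hv, hvinf⟩ := Finset.exists_mem_eq_inf' (Finset.nonempty_range_add_one)
      (fun v => lazyPath θ 0 ω v)
    have hrange : (pathRange θ 0 ω : ℝ) = ((lazyPath θ 0 ω u : ℤ) : ℝ)
        - ((lazyPath θ 0 ω v : ℤ) : ℝ) := by
      rw [pathRange, ← husup, ← hvinf]; push_cast; ring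
    rw [hrange] at hr
    by_cases hcase : r / 2 ≤ ((lazyPath θ 0 ω u : ℤ) : ℝ)
    · exact Finset.mem_biUnion.2 ⟨u, hu, Finset.mem_filter.2 ⟨Finset.mem_univ _,
        Or.inl (by linarith)⟩⟩
    · refine Finset.mem_biUnion.2 ⟨v, hv, Finset.mem_filter.2 ⟨Finset.mem_univ _,
        Or.inr (by push_neg at hcase; linarith)⟩⟩
  calc ((Finset.univ.filter (fun ω : Fin θ → Fin 3 =>
        r ≤ ((pathRange θ 0 ω : ℤ) : ℝ))).card : ℝ)
      ≤ (((Finset.range (θ + 1)).biUnion (fun u =>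
          Finset.univ.filter (fun ω : Fin θ → Fin 3 =>
            r / 2 ≤ (1 : ℝ) * ((lazyPath θ 0 ω u : ℤ) : ℝ)
            ∨ r / 2 ≤ (-1 : ℝ) * ((lazyPath θ 0 ω u : ℤ) : ℝ)))).card : ℝ) := by
        exact_mod_cast Finset.card_le_card hsub
    _ ≤ ∑ u ∈ Finset.range (θ + 1),
          ((Finset.univ.filter (fun ω : Fin θ → Fin 3 =>
            r / 2 ≤ (1 : ℝ) * ((lazyPath θ 0 ω u : ℤ) : ℝ)
            ∨ r / 2 ≤ (-1 : ℝ) * ((lazyPath θ 0 ω u : ℤ) : ℝ))).card : ℝ) := by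
        exact_mod_cast Finset.card_biUnion_le
    _ ≤ _ := by
        apply Finset.sum_le_sum
        intro u _
        have : (Finset.univ.filter (fun ω : Fin θ → Fin 3 =>
            r / 2 ≤ (1 : ℝ) * ((lazyPath θ 0 ω u : ℤ) : ℝ)
            ∨ r / 2 ≤ (-1 : ℝ) * ((lazyPath θ 0 ω u : ℤ) : ℝ))).card
            ≤ (Finset.univ.filter (fun ω : Fin θ → Fin 3 =>
              r / 2 ≤ (1 : ℝ) * ((lazyPath θ 0 ω u : ℤ) : ℝ))).card
            + (Finset.univ.filter (fun ω : Fin θ → Fin 3 =>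
              r / 2 ≤ (-1 : ℝ) * ((lazyPath θ 0 ω u : ℤ) : ℝ))).card := by
          rw [Finset.filter_or]
          exact Finset.card_union_le _ _
        exact_mod_cast this

lemma prob_range_le (θ : ℕ) (hθ : 0 < θ) (r : ℝ) (hr : 0 ≤ r) :
    ((Finset.univ.filter (fun ω : Fin θ → Fin 3 =>
        r ≤ ((pathRange θ 0 ω : ℤ) : ℝ))).card : ℝ) / 3 ^ θ
      ≤ 2 * ((θ : ℝ) + 1) * Real.exp (-(r ^ 2) / (8 * θ)) := by
  have hθR : (0:ℝ) < θ := by exact_mod_cast hθ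
  have hlam : 0 ≤ r / (2 * θ) := by positivity
  have hexp : (θ : ℝ) * (r / (2 * θ)) ^ 2 / 2 - (r / (2 * θ)) * (r / 2) = -(r ^ 2) / (8 * θ) := by
    field_simp
    ring
  have hmain : ((Finset.univ.filter (fun ω : Fin θ → Fin 3 =>
        r ≤ ((pathRange θ 0 ω : ℤ) : ℝ))).card : ℝ)
      ≤ 2 * ((θ : ℝ) + 1) * Real.exp (-(r ^ 2) / (8 * θ)) * 3 ^ θ := by
    calc ((Finset.univ.filter (fun ω : Fin θ → Fin 3 =>
          r ≤ ((pathRange θ 0 ω : ℤ) : ℝ))).card : ℝ)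
        ≤ ∑ u ∈ Finset.range (θ + 1),
            (((Finset.univ.filter (fun ω : Fin θ → Fin 3 =>
                r / 2 ≤ (1 : ℝ) * ((lazyPath θ 0 ω u : ℤ) : ℝ))).card : ℝ)
             + ((Finset.univ.filter (fun ω : Fin θ → Fin 3 =>
                r / 2 ≤ (-1 : ℝ) * ((lazyPath θ 0 ω u : ℤ) : ℝ))).card : ℝ)) :=
          range_count_le θ r
      _ ≤ ∑ _u ∈ Finset.range (θ + 1),
            (2 * (3 ^ θ * Real.exp (-(r ^ 2) / (8 * θ)))) := by
          apply Finset.sum_le_sum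
          intro u _
          have e1 := chernoff_count θ u (r / 2) (r / (2 * θ)) hlam 1 (Or.inl rfl)
          have e2 := chernoff_count θ u (r / 2) (r / (2 * θ)) hlam (-1) (Or.inr rfl)
          rw [hexp] at e1 e2
          linarith
      _ = 2 * ((θ : ℝ) + 1) * Real.exp (-(r ^ 2) / (8 * θ)) * 3 ^ θ := by
          rw [Finset.sum_const, Finset.card_range]
          push_cast
          ring
  rw [div_le_iff₀ (by positivity : (0:ℝ) < 3 ^ θ)]
  exact hmain

lemma prob_range_le' (θ : ℕ) (r : ℝ) (hr : 0 < r) (T : ℝ) (hT : 0 < T) (hθT : (θ : ℝ) ≤ T) :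
    ((Finset.univ.filter (fun ω : Fin θ → Fin 3 =>
        r ≤ ((pathRange θ 0 ω : ℤ) : ℝ))).card : ℝ) / 3 ^ θ
      ≤ 2 * (T + 1) * Real.exp (-(r ^ 2) / (8 * T)) := by
  rcases Nat.eq_zero_or_pos θ with h0 | hpos
  · subst h0
    have hempty : (Finset.univ.filter (fun ω : Fin 0 → Fin 3 =>
        r ≤ ((pathRange 0 0 ω : ℤ) : ℝ))).card = 0 := by
      rw [Finset.card_eq_zero, Finset.filter_eq_empty_iff]
      intro ω _
      have : pathRange 0 0 ω = 0 := by
        simp [pathRange, lazyPath]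
      rw [this]
      push_cast
      linarith
    rw [hempty]
    norm_num
    positivity
  · have hθR : (0:ℝ) < θ := by exact_mod_cast hpos
    calc ((Finset.univ.filter (fun ω : Fin θ → Fin 3 =>
          r ≤ ((pathRange θ 0 ω : ℤ) : ℝ))).card : ℝ) / 3 ^ θ
        ≤ 2 * ((θ : ℝ) + 1) * Real.exp (-(r ^ 2) / (8 * θ)) :=
          prob_range_le θ hpos r hr.le
      _ ≤ 2 * (T + 1) * Real.exp (-(r ^ 2) / (8 * T)) := by
          have hexp : -(r ^ 2) / (8 * (θ:ℝ)) ≤ -(r ^ 2) / (8 * T) := by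
            rw [div_le_div_iff₀ (by positivity) (by positivity)]
            nlinarith [sq_nonneg r]
          have h1 : Real.exp (-(r ^ 2) / (8 * (θ:ℝ))) ≤ Real.exp (-(r ^ 2) / (8 * T)) :=
            Real.exp_le_exp.2 hexp
          have h2 : (0:ℝ) < Real.exp (-(r ^ 2) / (8 * (θ:ℝ))) := Real.exp_pos _
          nlinarith [Real.exp_pos (-(r ^ 2) / (8 * T))]

lemma exp_neg_le_poly (B δ q : ℝ) (hB : 0 < B) (hδ : 0 < δ) (hq : 0 ≤ q) :
    ∃ C : ℝ, 0 < C ∧ ∀ x : ℝ, 1 ≤ x → Real.exp (-B * x ^ δ) ≤ C * x ^ (-q) := by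
  set k : ℕ := ⌈q / δ⌉₊ with hk
  have hkq : q ≤ (k : ℝ) * δ := by
    have := Nat.le_ceil (q / δ)
    rw [div_le_iff₀ hδ] at this
    exact this
  refine ⟨(k.factorial : ℝ) / B ^ k, by positivity, ?_⟩
  intro x hx
  have hx0 : (0:ℝ) < x := lt_of_lt_of_le one_pos hx
  set y : ℝ := B * x ^ δ with hy
  have hy0 : 0 < y := by positivity
  -- y^k / k! ≤ exp y
  have h1 : y ^ k / (k.factorial : ℝ) ≤ Real.exp y := by
    calc y ^ k / (k.factorial : ℝ)
        ≤ ∑ i ∈ Finset.range (k + 1), y ^ i / (i.factorial : ℝ) := by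
          exact Finset.single_le_sum (f := fun i => y ^ i / (i.factorial : ℝ))
            (fun i _ => by positivity) (Finset.self_mem_range_succ k)
      _ ≤ Real.exp y := Real.sum_le_exp_of_nonneg hy0.le _
  have h2 : Real.exp (-y) ≤ (k.factorial : ℝ) / y ^ k := by
    rw [Real.exp_neg]
    rw [inv_eq_one_div]
    rw [div_le_div_iff₀ (Real.exp_pos y) (by positivity)]
    calc 1 * y ^ k = (y ^ k / (k.factorial : ℝ)) * (k.factorial : ℝ) := by
          field_simp
      _ ≤ Real.exp y * (k.factorial : ℝ) := by
          apply mul_le_mul_of_nonneg_right h1 (by positivity)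
      _ = (k.factorial : ℝ) * Real.exp y := by ring
  -- y^k = B^k * x^(δ k) ≥ B^k x^q
  have h3 : B ^ k * x ^ q ≤ y ^ k := by
    rw [hy, mul_pow]
    apply mul_le_mul_of_nonneg_left _ (by positivity)
    rw [← Real.rpow_natCast (x ^ δ) k, ← Real.rpow_mul hx0.le]
    exact Real.rpow_le_rpow_of_exponent_le hx (by rw [mul_comm]; exact hkq)
  rw [show -B * x ^ δ = -y by rw [hy]; ring]
  calc Real.exp (-y) ≤ (k.factorial : ℝ) / y ^ k := h2
    _ ≤ (k.factorial : ℝ) / (B ^ k * x ^ q) := by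
        apply div_le_div_of_nonneg_left (by positivity) (by positivity) h3
    _ = (k.factorial : ℝ) / B ^ k * x ^ (-q) := by
        rw [Real.rpow_neg hx0.le]
        field_simp

lemma aux_summable (A B p δ : ℝ) (hA : 0 ≤ A) (hB : 0 < B) (hδ : 0 < δ) (hp : 0 ≤ p) :
    Summable (fun n : ℕ => (A * ((n + 1 : ℕ) : ℝ) ^ p + 1) * Real.exp (-B * ((n + 1 : ℕ) : ℝ) ^ δ)) := by
  obtain ⟨C, hC, hCle⟩ := exp_neg_le_poly B δ (p + 2) hB hδ (by positivity)
  have hsum2 : Summable (fun n : ℕ => ((A + 1) * C) * ((n + 1 : ℕ) : ℝ) ^ (-(2:ℝ))) := by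
    apply Summable.mul_left
    exact ((summable_nat_add_iff (f := fun n : ℕ => ((n : ℕ) : ℝ) ^ (-(2:ℝ))) 1).2
      (Real.summable_nat_rpow.2 (by norm_num)))
  apply Summable.of_nonneg_of_le _ _ hsum2
  · intro n
    have hx0 : (0:ℝ) < ((n + 1 : ℕ) : ℝ) := by positivity
    positivity
  · intro n
    set x : ℝ := ((n + 1 : ℕ) : ℝ) with hxdef
    have hx : (1:ℝ) ≤ x := by
      rw [hxdef]; exact_mod_cast Nat.one_le_iff_ne_zero.2 (Nat.succ_ne_zero n)
    have hx0 : (0:ℝ) < x := lt_of_lt_of_le one_pos hx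
    have h1 : (1:ℝ) ≤ x ^ p := by
      calc (1:ℝ) = x ^ (0:ℝ) := (Real.rpow_zero x).symm
        _ ≤ x ^ p := Real.rpow_le_rpow_of_exponent_le hx hp
    have hfront : A * x ^ p + 1 ≤ (A + 1) * x ^ p := by nlinarith
    calc (A * x ^ p + 1) * Real.exp (-B * x ^ δ)
        ≤ ((A + 1) * x ^ p) * (C * x ^ (-(p + 2))) := by
          apply mul_le_mul hfront (hCle x hx) (Real.exp_pos _).le (by positivity)
      _ = ((A + 1) * C) * (x ^ p * x ^ (-(p + 2))) := by ring
      _ = ((A + 1) * C) * x ^ (-(2:ℝ)) := by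
          rw [← Real.rpow_add hx0]
          norm_num

end Aux

theorem range_deviation_summable (t : ℝ) (ht : 0 < t) (ε : ℝ) (hε : 0 < ε)
    (C₀ : ℝ) (hC₀ : 0 < C₀) (hC₀' : C₀ ≤ 1)
    (d : ℝ) (hd₁ : 1 / 13 < d) (hd₂ : d < 1 / 2)
    (m : ℕ → ℝ) (hm : ∀ n, 0 < m n)
    (hlow : ∀ n : ℕ, 1 ≤ n → C₀ * (n : ℝ) ^ d ≤ m n)
    (hhigh : ∀ n : ℕ, 1 ≤ n → m n ≤ C₀⁻¹ * (n : ℝ) ^ d) :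
    Summable (fun n : ℕ =>
      ((Finset.univ.filter (fun ω : Fin ⌊(m (n + 1)) ^ 2 * t⌋₊ → Fin 3 =>
          (m (n + 1)) ^ ((1 : ℝ) + ε) ≤
            (pathRange ⌊(m (n + 1)) ^ 2 * t⌋₊ 0 ω : ℝ))).card : ℝ)
        / 3 ^ ⌊(m (n + 1)) ^ 2 * t⌋₊) := by
  have hd0 : (0:ℝ) < d := lt_trans (by norm_num) hd₁
  set A : ℝ := C₀⁻¹ ^ 2 * t with hA
  set B : ℝ := C₀ ^ (2 * ε) / (8 * t) with hB
  set p : ℝ := 2 * d with hp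
  set δ : ℝ := d * (2 * ε) with hδ
  have hBpos : 0 < B := by
    rw [hB]
    exact div_pos (Real.rpow_pos_of_pos hC₀ _) (by positivity)
  have hsum : Summable (fun n : ℕ =>
      2 * ((A * ((n + 1 : ℕ) : ℝ) ^ p + 1) * Real.exp (-B * ((n + 1 : ℕ) : ℝ) ^ δ))) :=
    (aux_summable A B p δ (by positivity) hBpos (by positivity) (by positivity)).mul_left 2
  apply Summable.of_nonneg_of_le _ _ hsum
  · intro n
    positivity
  · intro n
    set M : ℝ := m (n + 1) with hMdef
    have hM0 : 0 < M := hm _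
    set x : ℝ := ((n + 1 : ℕ) : ℝ) with hxdef
    have hx1 : (1:ℝ) ≤ x := by
      rw [hxdef]; exact_mod_cast Nat.one_le_iff_ne_zero.2 (Nat.succ_ne_zero n)
    have hx0 : (0:ℝ) < x := lt_of_lt_of_le one_pos hx1
    have hr0 : 0 < M ^ ((1:ℝ) + ε) := Real.rpow_pos_of_pos hM0 _
    have hT0 : 0 < M ^ 2 * t := by positivity
    -- Step 1 : apply prob_range_le'
    have step1 := prob_range_le' ⌊M ^ 2 * t⌋₊ (M ^ ((1:ℝ) + ε)) hr0 (M ^ 2 * t) hT0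
      (Nat.floor_le hT0.le)
    -- rewrite the exponent
    have hr2 : (M ^ ((1:ℝ) + ε)) ^ 2 = M ^ 2 * M ^ (2 * ε) := by
      rw [← Real.rpow_natCast (M ^ ((1:ℝ) + ε)) 2, ← Real.rpow_mul hM0.le,
        ← Real.rpow_natCast M 2, ← Real.rpow_add hM0]
      congr 1
      push_cast
      ring
    have hexpeq : -((M ^ ((1:ℝ) + ε)) ^ 2) / (8 * (M ^ 2 * t)) = -(M ^ (2 * ε)) / (8 * t) := by
      rw [hr2]
      field_simp
    rw [hexpeq] at step1
    -- Step 2 : compare with the summable majorant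
    have hmid : 2 * (M ^ 2 * t + 1) * Real.exp (-(M ^ (2 * ε)) / (8 * t))
        ≤ 2 * ((A * x ^ p + 1) * Real.exp (-B * x ^ δ)) := by
      have hMle : M ≤ C₀⁻¹ * x ^ d := hhigh (n + 1) (Nat.succ_le_succ (Nat.zero_le n))
      have hMge : C₀ * x ^ d ≤ M := hlow (n + 1) (Nat.succ_le_succ (Nat.zero_le n))
      have h1 : M ^ 2 * t ≤ A * x ^ p := by
        have hsq : M ^ 2 ≤ (C₀⁻¹ * x ^ d) ^ 2 := pow_le_pow_left₀ hM0.le hMle 2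
        have h2' : (C₀⁻¹ * x ^ d) ^ 2 = C₀⁻¹ ^ 2 * x ^ p := by
          rw [mul_pow, ← Real.rpow_natCast (x ^ d) 2, ← Real.rpow_mul hx0.le,
            show d * ((2:ℕ):ℝ) = p by rw [hp]; push_cast; ring]
        calc M ^ 2 * t ≤ (C₀⁻¹ ^ 2 * x ^ p) * t :=
              mul_le_mul_of_nonneg_right (h2' ▸ hsq) ht.le
          _ = A * x ^ p := by rw [hA]; ring
      have h2 : B * x ^ δ ≤ M ^ (2 * ε) / (8 * t) := by
        have hc1 : (C₀ * x ^ d) ^ (2 * ε) ≤ M ^ (2 * ε) :=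
          Real.rpow_le_rpow (by positivity) hMge (by positivity)
        have hc2 : (C₀ * x ^ d) ^ (2 * ε) = C₀ ^ (2 * ε) * x ^ δ := by
          rw [Real.mul_rpow hC₀.le (Real.rpow_nonneg hx0.le _),
            ← Real.rpow_mul hx0.le, hδ]
        rw [hB, div_mul_eq_mul_div, div_le_div_iff₀ (by positivity) (by positivity)]
        have := hc2 ▸ hc1
        nlinarith [Real.rpow_pos_of_pos hx0 δ]
      have h3 : Real.exp (-(M ^ (2 * ε)) / (8 * t)) ≤ Real.exp (-B * x ^ δ) := by
        apply Real.exp_le_exp.2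
        rw [neg_div, neg_mul]
        exact neg_le_neg h2
      have hE : 0 < Real.exp (-(M ^ (2 * ε)) / (8 * t)) := Real.exp_pos _
      nlinarith [Real.exp_pos (-B * x ^ δ)]
    exact le_trans step1 hmid
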